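/- arXiv:2507.13220 — 2 statements merged into one kernel-verified Lean document; each statement's English description precedes it below -/
import Mathlib

section
/- Let φ: ℝⁿ → ℂ be measurable and let ψ(x) = sup_{|y| ≥ |x|} |φ(y)| be its least decreasing radial majorant, assumed integrable with ∫ ψ = A < ∞. Set φ_t(x) = t^{−n} φ(x/t). Then for every locally integrable f ≥ 0 and every t > 0, (φ_t * f)(x) ≤ A · Mf(x) for a.e. x, where Mf is the Hardy–Littlewood maximal function. -/
open MeasureTheory Real
open scoped ENNReal

/-- The centered Hardy–Littlewood maximal function
`Mf(x) = sup_{r>0} |B(x,r)|⁻¹ ∫_{B(x,r)} |f|`, valued in `ℝ≥0∞`. -/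
noncomputable def hlMaximal {n : ℕ} (f : EuclideanSpace ℝ (Fin n) → ℝ)
    (x : EuclideanSpace ℝ (Fin n)) : ℝ≥0∞ :=
  ⨆ (r : ℝ) (_ : 0 < r),
    (volume (Metric.ball x r))⁻¹ * ∫⁻ y in Metric.ball x r, ENNReal.ofReal |f y|

theorem stmt3 (n : ℕ) (φ : EuclideanSpace ℝ (Fin n) → ℂ) (hφ : Measurable φ)
    (ψ : EuclideanSpace ℝ (Fin n) → ℝ)
    -- `ψ(x) = sup_{|y| ≥ |x|} |φ(y)|` is the least decreasing radial majorant of `φ`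
    (hψ : ∀ x, IsLUB {s : ℝ | ∃ y, ‖x‖ ≤ ‖y‖ ∧ s = ‖φ y‖} (ψ x))
    (hψint : Integrable ψ)
    (f : EuclideanSpace ℝ (Fin n) → ℝ) (hf0 : ∀ x, 0 ≤ f x)
    (hfloc : LocallyIntegrable f) (t : ℝ) (ht : 0 < t) :
    ∀ᵐ x : EuclideanSpace ℝ (Fin n), ENNReal.ofReal
        ‖∫ y, ((t ^ n : ℝ)⁻¹ : ℂ) * φ (t⁻¹ • (x - y)) * (f y : ℂ)‖
      ≤ ENNReal.ofReal (∫ y, ψ y) * hlMaximal f x := by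
  have hψle : ∀ z, ‖φ z‖ ≤ ψ z := fun z => (hψ z).1 ⟨z, le_rfl, rfl⟩
  have hψ0 : ∀ z, 0 ≤ ψ z := fun z => (norm_nonneg _).trans (hψle z)
  have hanti : ∀ a b : EuclideanSpace ℝ (Fin n), ‖a‖ ≤ ‖b‖ → ψ b ≤ ψ a := fun a b hab =>
    (hψ b).2 fun s hs => by
      obtain ⟨y, hy, rfl⟩ := hs
      exact (hψ a).1 ⟨y, hab.trans hy, rfl⟩
  obtain rfl | hn := Nat.eq_zero_or_pos n
  · -- the zero-dimensional case
    refine ae_of_all _ fun x => ?_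
    have hV : (volume : Measure (EuclideanSpace ℝ (Fin 0))) Set.univ = 1 := by
      have h : (volume : Measure (Fin 0 → ℝ)) Set.univ = 1 := by
        rw [show (Set.univ : Set (Fin 0 → ℝ)) = Set.univ.pi (fun _ => Set.univ) by simp]
        rw [MeasureTheory.volume_pi_pi]; simp
      have h2 := (EuclideanSpace.volume_preserving_symm_measurableEquiv_toLp (ι := Fin 0)).measure_preimage
        (s := Set.univ) (by simp)
      rw [show (MeasurableEquiv.toLp 2 (Fin 0 → ℝ)).symm ⁻¹' Set.univ = Set.univ by simp] at h2
      rw [h2, h]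
    have hxd : x = default := Subsingleton.elim _ _
    have hM : ENNReal.ofReal (f x) ≤ hlMaximal f x := by
      have hb : Metric.ball x (1 : ℝ) = Set.univ :=
        Set.eq_univ_of_forall fun y => by
          simp [Metric.mem_ball, show y = x from Subsingleton.elim _ _]
      have hconst : (fun y : EuclideanSpace ℝ (Fin 0) => ENNReal.ofReal |f y|)
          = fun _ => ENNReal.ofReal |f x| :=
        funext fun y => by rw [Subsingleton.elim y x]
      have hle : (volume (Metric.ball x (1:ℝ)))⁻¹ *
          ∫⁻ y in Metric.ball x (1:ℝ), ENNReal.ofReal |f y| = ENNReal.ofReal (f x) := by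
        rw [hb, Measure.restrict_univ, hconst, lintegral_const, hV, mul_one]
        simp [abs_of_nonneg (hf0 x)]
      calc ENNReal.ofReal (f x) = _ := hle.symm
        _ ≤ hlMaximal f x := le_iSup₂ (f := fun (r : ℝ) (_ : 0 < r) =>
            (volume (Metric.ball x r))⁻¹ * ∫⁻ y in Metric.ball x r, ENNReal.ofReal |f y|)
            (1 : ℝ) one_pos
    have hint : ∫ y, ψ y = ψ x := by
      rw [integral_unique, measureReal_def, hV]
      simp only [ENNReal.toReal_one, one_smul]
      exact congrArg ψ (Subsingleton.elim _ _)
    have hintF : (∫ y, ((t ^ 0 : ℝ)⁻¹ : ℂ) * φ (t⁻¹ • (x - y)) * (f y : ℂ))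
        = φ x * (f x : ℂ) := by
      have h1 : ((t ^ 0 : ℝ) : ℂ)⁻¹ = 1 := by norm_num
      rw [integral_unique, measureReal_def, hV, h1, one_mul, ENNReal.toReal_one, one_smul]
      exact congrArg₂ (fun (a : ℂ) (b : ℝ) => a * (b : ℂ))
        (congrArg φ (Subsingleton.elim _ _)) (congrArg f (Subsingleton.elim _ _))
    rw [hintF, hint]
    calc ENNReal.ofReal ‖φ x * (f x : ℂ)‖
        = ENNReal.ofReal (‖φ x‖ * f x) := by
          rw [norm_mul, Complex.norm_real, Real.norm_eq_abs, abs_of_nonneg (hf0 x)]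
      _ ≤ ENNReal.ofReal (ψ x) * ENNReal.ofReal (f x) := by
          rw [← ENNReal.ofReal_mul (hψ0 x)]
          exact ENNReal.ofReal_le_ofReal (mul_le_mul_of_nonneg_right (hψle x) (hf0 x))
      _ ≤ ENNReal.ofReal (ψ x) * hlMaximal f x := mul_le_mul_right hM _
  -- the main case `n ≥ 1`
  haveI : Nontrivial (EuclideanSpace ℝ (Fin n)) :=
    ⟨EuclideanSpace.single ⟨0, hn⟩ 1, 0, fun h => by
      have := congrArg norm h
      rw [EuclideanSpace.norm_single] at this
      simp at this⟩
  -- measurability of ψ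
  have hψm : Measurable ψ := by
    set e : EuclideanSpace ℝ (Fin n) := EuclideanSpace.single ⟨0, hn⟩ (1:ℝ) with he
    have hne : ∀ r : ℝ, ‖(max r 0) • e‖ = max r 0 := fun r => by
      rw [norm_smul, he, EuclideanSpace.norm_single]
      simp [abs_of_nonneg (le_max_right r 0)]
    have hw : Antitone (fun r : ℝ => ψ ((max r 0) • e)) := fun r r' h =>
      hanti _ _ (by rw [hne, hne]; exact max_le_max h le_rfl)
    have hrepr : ψ = fun z => ψ ((max ‖z‖ 0) • e) := funext fun z => by
      have h1 : ‖(max ‖z‖ 0) • e‖ = ‖z‖ := by rw [hne]; exact max_eq_left (norm_nonneg z)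
      exact le_antisymm (hanti _ _ h1.le) (hanti _ _ h1.ge)
    rw [hrepr]
    exact hw.measurable.comp measurable_norm
  refine ae_of_all _ fun x => ?_
  set M := hlMaximal f x with hM
  set T : EuclideanSpace ℝ (Fin n) → EuclideanSpace ℝ (Fin n) := fun y => t⁻¹ • (x - y) with hT
  have hTm : Measurable T := by rw [hT]; fun_prop
  set g : EuclideanSpace ℝ (Fin n) → ℝ≥0∞ := fun y => ENNReal.ofReal (f y) with hg
  have hgm : AEMeasurable g volume :=
    ENNReal.measurable_ofReal.comp_aemeasurable hfloc.aestronglyMeasurable.aemeasurable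
  set ν := volume.withDensity g with hν
  have htn : (0:ℝ) < t ^ n := pow_pos ht n
  have hB0 : 0 < volume (Metric.ball (0 : EuclideanSpace ℝ (Fin n)) 1) :=
    Metric.measure_ball_pos _ _ one_pos
  have hBt : volume (Metric.ball (0 : EuclideanSpace ℝ (Fin n)) 1) ≠ ⊤ := measure_ball_lt_top.ne
  have hLfin : ∫⁻ z, ENNReal.ofReal (ψ z) ≠ ⊤ := hψint.lintegral_lt_top.ne
  -- Step 1: pass to the Lebesgue integral against the density measure ν
  have hψTm : Measurable fun y => ψ (T y) := hψm.comp hTm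
  have step1 : ENNReal.ofReal ‖∫ y, ((t ^ n : ℝ)⁻¹ : ℂ) * φ (T y) * (f y : ℂ)‖
      ≤ ENNReal.ofReal (t ^ n)⁻¹ * ∫⁻ y, ENNReal.ofReal (ψ (T y)) ∂ν := by
    rw [hν, lintegral_withDensity_eq_lintegral_mul₀ hgm
      hψTm.ennreal_ofReal.aemeasurable]
    calc ENNReal.ofReal ‖∫ y, ((t ^ n : ℝ)⁻¹ : ℂ) * φ (T y) * (f y : ℂ)‖
        ≤ ∫⁻ y, ‖((t ^ n : ℝ)⁻¹ : ℂ) * φ (T y) * (f y : ℂ)‖₊ := by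
          rw [ofReal_norm_eq_enorm]
          exact enorm_integral_le_lintegral_enorm _
      _ ≤ ∫⁻ y, ENNReal.ofReal (t ^ n)⁻¹ *
            ((g * fun y => ENNReal.ofReal (ψ (T y))) y) := by
          refine lintegral_mono fun y => ?_
          rw [← enorm_eq_nnnorm, ← ofReal_norm_eq_enorm]
          have h1 : ‖((t ^ n : ℝ)⁻¹ : ℂ) * φ (T y) * (f y : ℂ)‖
              = (t ^ n)⁻¹ * ‖φ (T y)‖ * f y := by
            simp only [norm_mul, norm_inv, Complex.norm_real, Real.norm_eq_abs]
            rw [abs_of_nonneg htn.le, abs_of_nonneg (hf0 y)]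
          rw [h1, ENNReal.ofReal_mul (by positivity),
            ENNReal.ofReal_mul (inv_nonneg.2 htn.le), Pi.mul_apply, mul_assoc]
          refine mul_le_mul_right ?_ _
          rw [mul_comm]
          exact mul_le_mul_right (ENNReal.ofReal_le_ofReal (hψle _)) _
      _ = _ := lintegral_const_mul' _ _ ENNReal.ofReal_ne_top
  -- Step 2: layer cake for ν
  have step2 : ∫⁻ y, ENNReal.ofReal (ψ (T y)) ∂ν
      = ∫⁻ s in Set.Ioi (0:ℝ), ν {y | s < ψ (T y)} :=
    lintegral_eq_lintegral_meas_lt ν (ae_of_all _ fun y => hψ0 _)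
      hψTm.aemeasurable
  -- Step 3: key pointwise (in s) bound
  have key : ∀ s : ℝ, 0 < s →
      ν {y | s < ψ (T y)} ≤ ENNReal.ofReal (t ^ n) * volume {z | s < ψ z} * M := by
    intro s hs
    set S := {z : EuclideanSpace ℝ (Fin n) | s < ψ z} with hS
    have hSm : MeasurableSet S := measurableSet_lt measurable_const hψm
    have hSfin : volume S < ⊤ := by
      have h1 : ENNReal.ofReal s * volume S ≤ ∫⁻ z, ENNReal.ofReal (ψ z) := by
        refine le_trans (mul_le_mul_right (measure_mono ?_) _)
          (mul_meas_ge_le_lintegral₀ hψm.ennreal_ofReal.aemeasurable _)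
        exact fun z hz => ENNReal.ofReal_le_ofReal (le_of_lt hz)
      by_contra h
      push_neg at h
      rw [top_le_iff.mp h, ENNReal.mul_top (ENNReal.ofReal_pos.2 hs).ne'] at h1
      exact hLfin (top_le_iff.mp h1)
    have hrad : ∀ z ∈ S, Metric.closedBall (0 : EuclideanSpace ℝ (Fin n)) ‖z‖ ⊆ S := by
      intro z hz w hw
      rw [Metric.mem_closedBall, dist_zero_right] at hw
      exact lt_of_lt_of_le hz (hanti w z hw)
    have hbdd : BddAbove (insert (0:ℝ) (norm '' S)) := by
      refine ⟨max 1 ((volume S /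
          volume (Metric.ball (0 : EuclideanSpace ℝ (Fin n)) 1)).toReal), ?_⟩
      rintro r (rfl | ⟨z, hz, rfl⟩)
      · exact le_max_of_le_left zero_le_one
      by_cases h1 : ‖z‖ ≤ 1
      · exact le_max_of_le_left h1
      push_neg at h1
      have h2 : volume (Metric.closedBall (0 : EuclideanSpace ℝ (Fin n)) ‖z‖) ≤ volume S :=
        measure_mono (hrad z hz)
      rw [Measure.addHaar_closedBall _ _ (norm_nonneg z), finrank_euclideanSpace_fin] at h2
      have h3 : ENNReal.ofReal (‖z‖ ^ n)
          ≤ volume S / volume (Metric.ball (0 : EuclideanSpace ℝ (Fin n)) 1) :=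
        (ENNReal.le_div_iff_mul_le (Or.inl hB0.ne') (Or.inl hBt)).2 h2
      have h4 : ‖z‖ ^ n
          ≤ (volume S / volume (Metric.ball (0 : EuclideanSpace ℝ (Fin n)) 1)).toReal :=
        (ENNReal.ofReal_le_iff_le_toReal (ENNReal.div_lt_top hSfin.ne hB0.ne').ne).1 h3
      exact le_max_of_le_right ((le_self_pow₀ h1.le hn.ne').trans h4)
    set R := sSup (insert (0:ℝ) (norm '' S)) with hRdef
    have hR0 : 0 ≤ R := le_csSup hbdd (Set.mem_insert _ _)
    have hub : ∀ z ∈ S, ‖z‖ ≤ R := fun z hz =>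
      le_csSup hbdd (Set.mem_insert_of_mem _ ⟨z, hz, rfl⟩)
    have hball : Metric.ball (0 : EuclideanSpace ℝ (Fin n)) R ⊆ S := by
      intro w hw
      rw [Metric.mem_ball, dist_zero_right] at hw
      obtain ⟨r, hrmem, hlt⟩ := exists_lt_of_lt_csSup (Set.insert_nonempty _ _) hw
      rcases hrmem with rfl | ⟨z, hz, rfl⟩
      · exact absurd hlt (not_lt.2 (norm_nonneg w))
      · exact hrad z hz (by rw [Metric.mem_closedBall, dist_zero_right]; exact hlt.le)
    have hvolS : volume S = volume (Metric.ball (0 : EuclideanSpace ℝ (Fin n)) R) := by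
      refine le_antisymm ?_ (measure_mono hball)
      calc volume S ≤ volume (Metric.closedBall (0 : EuclideanSpace ℝ (Fin n)) R) :=
            measure_mono fun z hz => by
              rw [Metric.mem_closedBall, dist_zero_right]; exact hub z hz
        _ = _ := Measure.addHaar_closedBall_eq_addHaar_ball _ _ _
    have hEsub : {y | s < ψ (T y)} ⊆ Metric.closedBall x (t * R) := by
      intro y hy
      have h1 : ‖T y‖ ≤ R := hub _ hy
      rw [Metric.mem_closedBall, dist_comm, dist_eq_norm]
      have h2 : ‖x - y‖ = t * ‖T y‖ := by
        rw [hT, norm_smul, norm_inv, Real.norm_eq_abs, abs_of_pos ht, ← mul_assoc,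
          mul_inv_cancel₀ ht.ne', one_mul]
      rw [h2]
      exact mul_le_mul_of_nonneg_left h1 ht.le
    rcases eq_or_lt_of_le hR0 with hR | hR
    · -- R = 0 : the superlevel set is contained in a point, hence ν-null
      have h0 : ν {y | s < ψ (T y)} = 0 := by
        have hcb : Metric.closedBall x (t * R) = {x} := by
          rw [← hR, mul_zero, Metric.closedBall_zero]
        refine measure_mono_null (hcb ▸ hEsub) ?_
        rw [hν, withDensity_apply _ (measurableSet_singleton x),
          Measure.restrict_eq_zero.2 (measure_singleton x)]
        simp
      rw [h0]
      exact zero_le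
    · have htR : 0 < t * R := mul_pos ht hR
      have hEm : MeasurableSet {y | s < ψ (T y)} :=
        measurableSet_lt measurable_const hψTm
      have hae : (Metric.closedBall x (t * R) : Set (EuclideanSpace ℝ (Fin n)))
          =ᵐ[volume] Metric.ball x (t * R) := by
        rw [MeasureTheory.ae_eq_set]
        constructor
        · rw [Metric.closedBall_diff_ball]
          exact Measure.addHaar_sphere volume x (t * R)
        · rw [Set.diff_eq_empty.2 Metric.ball_subset_closedBall]
          exact measure_empty
      have hsub2 : ν {y | s < ψ (T y)}
          ≤ ∫⁻ y in Metric.ball x (t * R), ENNReal.ofReal |f y| := by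
        rw [hν, withDensity_apply _ hEm]
        calc ∫⁻ y in {y | s < ψ (T y)}, g y
            ≤ ∫⁻ y in Metric.closedBall x (t * R), g y := lintegral_mono_set hEsub
          _ = ∫⁻ y in Metric.ball x (t * R), g y := setLIntegral_congr hae
          _ = ∫⁻ y in Metric.ball x (t * R), ENNReal.ofReal |f y| := by
              refine lintegral_congr fun y => ?_
              rw [hg, abs_of_nonneg (hf0 y)]
      have hMle : ∫⁻ y in Metric.ball x (t * R), ENNReal.ofReal |f y|
          ≤ volume (Metric.ball x (t * R)) * M := by
        have h1 : (volume (Metric.ball x (t * R)))⁻¹ *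
            ∫⁻ y in Metric.ball x (t * R), ENNReal.ofReal |f y| ≤ M := by
          rw [hM]
          exact le_iSup₂ (f := fun (r : ℝ) (_ : 0 < r) =>
            (volume (Metric.ball x r))⁻¹ * ∫⁻ y in Metric.ball x r, ENNReal.ofReal |f y|)
            (t * R) htR
        have hv0 : volume (Metric.ball x (t * R)) ≠ 0 := (Metric.measure_ball_pos _ _ htR).ne'
        have hvt : volume (Metric.ball x (t * R)) ≠ ⊤ := measure_ball_lt_top.ne
        calc ∫⁻ y in Metric.ball x (t * R), ENNReal.ofReal |f y|
            = volume (Metric.ball x (t * R)) * ((volume (Metric.ball x (t * R)))⁻¹ *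
              ∫⁻ y in Metric.ball x (t * R), ENNReal.ofReal |f y|) := by
              rw [← mul_assoc, ENNReal.mul_inv_cancel hv0 hvt, one_mul]
          _ ≤ _ := mul_le_mul_right h1 _
      have hvol : volume (Metric.ball x (t * R)) = ENNReal.ofReal (t ^ n) * volume S := by
        rw [Measure.addHaar_ball_mul_of_pos volume x ht, finrank_euclideanSpace_fin, hvolS]
      calc ν {y | s < ψ (T y)} ≤ volume (Metric.ball x (t * R)) * M := hsub2.trans hMle
        _ = ENNReal.ofReal (t ^ n) * volume S * M := by rw [hvol]
  -- Step 4: integrate the key bound in s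
  have hvm : Measurable fun s : ℝ => volume {z : EuclideanSpace ℝ (Fin n) | s < ψ z} := by
    have h : Antitone fun s : ℝ => volume {z : EuclideanSpace ℝ (Fin n) | s < ψ z} :=
      fun a b hab => measure_mono fun z hz => lt_of_le_of_lt hab hz
    exact h.measurable
  have step3 : ∫⁻ s in Set.Ioi (0:ℝ), ν {y | s < ψ (T y)}
      ≤ (ENNReal.ofReal (t ^ n) * M) *
        ∫⁻ s in Set.Ioi (0:ℝ), volume {z : EuclideanSpace ℝ (Fin n) | s < ψ z} := by
    calc ∫⁻ s in Set.Ioi (0:ℝ), ν {y | s < ψ (T y)}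
        ≤ ∫⁻ s in Set.Ioi (0:ℝ), (ENNReal.ofReal (t ^ n) * M) *
            volume {z : EuclideanSpace ℝ (Fin n) | s < ψ z} := by
          refine setLIntegral_mono (hvm.const_mul _) fun s hs => ?_
          calc ν {y | s < ψ (T y)}
              ≤ ENNReal.ofReal (t ^ n) * volume {z | s < ψ z} * M := key s hs
            _ = (ENNReal.ofReal (t ^ n) * M) * volume {z | s < ψ z} := by ring
      _ = _ := lintegral_const_mul _ hvm
  have step4 : ∫⁻ s in Set.Ioi (0:ℝ), volume {z : EuclideanSpace ℝ (Fin n) | s < ψ z}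
      = ENNReal.ofReal (∫ z, ψ z) := by
    rw [ofReal_integral_eq_lintegral_ofReal hψint (ae_of_all _ hψ0)]
    exact (lintegral_eq_lintegral_meas_lt volume (ae_of_all _ hψ0) hψm.aemeasurable).symm
  calc ENNReal.ofReal ‖∫ y, ((t ^ n : ℝ)⁻¹ : ℂ) * φ (T y) * (f y : ℂ)‖
      ≤ ENNReal.ofReal (t ^ n)⁻¹ * ∫⁻ y, ENNReal.ofReal (ψ (T y)) ∂ν := step1
    _ = ENNReal.ofReal (t ^ n)⁻¹ * ∫⁻ s in Set.Ioi (0:ℝ), ν {y | s < ψ (T y)} := by rw [step2]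
    _ ≤ ENNReal.ofReal (t ^ n)⁻¹ *
        ((ENNReal.ofReal (t ^ n) * M) * ENNReal.ofReal (∫ z, ψ z)) := by
        rw [← step4]
        exact mul_le_mul_right step3 _
    _ = (ENNReal.ofReal (t ^ n)⁻¹ * ENNReal.ofReal (t ^ n)) *
        (ENNReal.ofReal (∫ z, ψ z) * M) := by ring
    _ = ENNReal.ofReal (∫ z, ψ z) * M := by
        rw [← ENNReal.ofReal_mul (inv_nonneg.2 htn.le), inv_mul_cancel₀ htn.ne',
          ENNReal.ofReal_one, one_mul]
end

section
/- With s = tanh t ∈ (0,1), the Hermite heat kernel satisfies the lower bound h_t^H(x,y) ≥ e^{−(9s/4)|x|²} ((1−s²)/(1+9s²))^{n/2} h_{s/(1+9s²)}(x − y) for all x, y ∈ ℝⁿ, where h_τ denotes the Euclidean heat kernel. -/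
open MeasureTheory Real

/-- The Euclidean heat kernel `h_τ(z) = (4πτ)^{-n/2} e^{-|z|²/(4τ)}`. -/
noncomputable def heatKernel (n : ℕ) (τ : ℝ) (z : EuclideanSpace ℝ (Fin n)) : ℝ :=
  (4 * π * τ) ^ (-(n : ℝ) / 2) * Real.exp (-‖z‖ ^ 2 / (4 * τ))

/-- The Hermite heat kernel in Meda's parametrization `s = tanh t`. -/
noncomputable def hermiteHeatKernelMeda (n : ℕ) (s : ℝ)
    (x y : EuclideanSpace ℝ (Fin n)) : ℝ :=
  ((1 - s ^ 2) / (4 * π * s)) ^ ((n : ℝ) / 2) *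
    Real.exp (-(1 / 4) * (s * ‖x + y‖ ^ 2 + ‖x - y‖ ^ 2 / s))

theorem stmt12 (n : ℕ) (t : ℝ) (ht : 0 < t) (s : ℝ) (hs : s = Real.tanh t)
    (x y : EuclideanSpace ℝ (Fin n)) :
    Real.exp (-(9 * s / 4) * ‖x‖ ^ 2) * ((1 - s ^ 2) / (1 + 9 * s ^ 2)) ^ ((n : ℝ) / 2) *
        heatKernel n (s / (1 + 9 * s ^ 2)) (x - y)
      ≤ hermiteHeatKernelMeda n s x y := by
  have hπ : (0:ℝ) < π := Real.pi_pos
  have hs0 : 0 < s := by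
    rw [hs, Real.tanh_eq_sinh_div_cosh]
    exact div_pos (Real.sinh_pos_iff.mpr ht) (Real.cosh_pos t)
  have hs1 : s < 1 := by
    rw [hs, Real.tanh_eq_sinh_div_cosh]
    rw [div_lt_one (Real.cosh_pos t)]
    exact Real.sinh_lt_cosh t
  have h1s : 0 < 1 - s ^ 2 := by nlinarith
  have h9 : 0 < 1 + 9 * s ^ 2 := by positivity
  have hτ0 : 0 < s / (1 + 9 * s ^ 2) := by positivity
  unfold heatKernel hermiteHeatKernelMeda
  have hpre : ((1 - s ^ 2) / (1 + 9 * s ^ 2)) ^ ((n : ℝ) / 2) *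
      (4 * π * (s / (1 + 9 * s ^ 2))) ^ (-(n : ℝ) / 2)
      = ((1 - s ^ 2) / (4 * π * s)) ^ ((n : ℝ) / 2) := by
    have hAB : (1 - s ^ 2) / (4 * π * s) =
        ((1 - s ^ 2) / (1 + 9 * s ^ 2)) / (4 * π * (s / (1 + 9 * s ^ 2))) := by
      field_simp
    rw [hAB, neg_div, Real.rpow_neg (by positivity),
      Real.div_rpow (by positivity : (0:ℝ) ≤ (1 - s ^ 2) / (1 + 9 * s ^ 2)) (by positivity),
      Real.div_rpow h1s.le (by positivity), div_eq_mul_inv]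
    ring
  have htri : ‖x + y‖ ≤ 2 * ‖x‖ + ‖x - y‖ := by
    have h : x + y = (2:ℝ) • x - (x - y) := by module
    rw [h]
    calc ‖(2:ℝ) • x - (x - y)‖ ≤ ‖(2:ℝ) • x‖ + ‖x - y‖ := norm_sub_le _ _
      _ = 2 * ‖x‖ + ‖x - y‖ := by rw [norm_smul]; simp
  have key : Real.exp (-(9 * s / 4) * ‖x‖ ^ 2) *
      Real.exp (-‖x - y‖ ^ 2 / (4 * (s / (1 + 9 * s ^ 2))))
      ≤ Real.exp (-(1 / 4) * (s * ‖x + y‖ ^ 2 + ‖x - y‖ ^ 2 / s)) := by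
    rw [← Real.exp_add]
    apply Real.exp_le_exp.mpr
    have ha := norm_nonneg x
    have hb := norm_nonneg (x - y)
    have hc := norm_nonneg (x + y)
    have hc2 : ‖x + y‖ ^ 2 ≤ 9 * ‖x‖ ^ 2 + 9 * ‖x - y‖ ^ 2 := by
      have h1 : ‖x + y‖ ^ 2 ≤ (2 * ‖x‖ + ‖x - y‖) ^ 2 := by
        apply pow_le_pow_left₀ hc htri
      nlinarith [sq_nonneg (‖x‖ - 2 * ‖x - y‖)]
    have hdiff : -(1 / 4) * (s * ‖x + y‖ ^ 2 + ‖x - y‖ ^ 2 / s) -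
        (-(9 * s / 4) * ‖x‖ ^ 2 + -‖x - y‖ ^ 2 / (4 * (s / (1 + 9 * s ^ 2))))
        = s / 4 * (9 * ‖x‖ ^ 2 + 9 * ‖x - y‖ ^ 2 - ‖x + y‖ ^ 2) := by
      field_simp
      ring
    nlinarith [mul_nonneg (by positivity : (0:ℝ) ≤ s / 4)
      (by linarith : 0 ≤ 9 * ‖x‖ ^ 2 + 9 * ‖x - y‖ ^ 2 - ‖x + y‖ ^ 2)]
  calc Real.exp (-(9 * s / 4) * ‖x‖ ^ 2) * ((1 - s ^ 2) / (1 + 9 * s ^ 2)) ^ ((n : ℝ) / 2) *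
        ((4 * π * (s / (1 + 9 * s ^ 2))) ^ (-(n : ℝ) / 2) *
          Real.exp (-‖x - y‖ ^ 2 / (4 * (s / (1 + 9 * s ^ 2)))))
      = (((1 - s ^ 2) / (1 + 9 * s ^ 2)) ^ ((n : ℝ) / 2) *
          (4 * π * (s / (1 + 9 * s ^ 2))) ^ (-(n : ℝ) / 2)) *
        (Real.exp (-(9 * s / 4) * ‖x‖ ^ 2) *
          Real.exp (-‖x - y‖ ^ 2 / (4 * (s / (1 + 9 * s ^ 2))))) := by ring
    _ = ((1 - s ^ 2) / (4 * π * s)) ^ ((n : ℝ) / 2) *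
        (Real.exp (-(9 * s / 4) * ‖x‖ ^ 2) *
          Real.exp (-‖x - y‖ ^ 2 / (4 * (s / (1 + 9 * s ^ 2))))) := by rw [hpre]
    _ ≤ _ := mul_le_mul_of_nonneg_left key (by positivity)
end
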